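/- arXiv:2408.04607 — 4 statements merged into one kernel-verified Lean document; each statement's English description precedes it below -/
import Mathlib

section
/- Let Σ be a nonzero real symmetric positive-semidefinite N×N matrix, let K be a real symmetric positive-definite T×T matrix with (1/T)·Tr(K) = 1, and let q > 0 and λ > 0. Suppose κ_c > 0 and κ̃_c > 0 satisfy df¹_K(κ̃_c) = q·df¹_Σ(κ_c) and κ_c·κ̃_c·q·df¹_Σ(κ_c) = λ, and suppose κ_u > 0 satisfies κ_u·(1 − q·df¹_Σ(κ_u)) = λ. Then df¹_Σ(κ_c) ≤ df¹_Σ(κ_u): the presence of correlations decreases (or keeps constant) the first degrees of freedom. -/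
open Matrix

/-- First degrees of freedom: `df¹_A(κ) = (1/n)·Tr(A(A + κI)⁻¹)`. -/
noncomputable def df1 {n : ℕ} (A : Matrix (Fin n) (Fin n) ℝ) (κ : ℝ) : ℝ :=
  (1 / (n : ℝ)) * (A * (A + κ • (1 : Matrix (Fin n) (Fin n) ℝ))⁻¹).trace

/-- Second degrees of freedom: `df²_A(κ) = (1/n)·Tr(A²(A + κI)⁻²)`. -/
noncomputable def df2 {n : ℕ} (A : Matrix (Fin n) (Fin n) ℝ) (κ : ℝ) : ℝ :=
  (1 / (n : ℝ)) * (A ^ 2 * ((A + κ • (1 : Matrix (Fin n) (Fin n) ℝ))⁻¹) ^ 2).trace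

lemma trace_conj {n : ℕ} (U : Matrix (Fin n) (Fin n) ℝ) (hUU : U * star U = 1)
    (hU'U : star U * U = 1) (d : Fin n → ℝ) (κ : ℝ) (hd : ∀ i, d i + κ ≠ 0)
    (A : Matrix (Fin n) (Fin n) ℝ) (hspec : A = U * diagonal d * star U) :
    (A * (A + κ • (1 : Matrix (Fin n) (Fin n) ℝ))⁻¹).trace
      = ∑ i, d i / (d i + κ) := by
  subst hspec
  have hAκ : U * diagonal d * star U + κ • 1 = U * diagonal (fun i => d i + κ) * star U := by
    have h1 : (κ • (1 : Matrix (Fin n) (Fin n) ℝ)) = U * (diagonal fun _ => κ) * star U := by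
      rw [← Matrix.smul_one_eq_diagonal, Matrix.mul_smul, Matrix.smul_mul, mul_one, hUU]
    rw [h1, ← Matrix.add_mul, ← Matrix.mul_add, Matrix.diagonal_add]
  have hinv : (U * diagonal d * star U + κ • 1)⁻¹
      = U * diagonal (fun i => (d i + κ)⁻¹) * star U := by
    apply Matrix.inv_eq_right_inv
    rw [hAκ]
    calc U * diagonal (fun i => d i + κ) * star U *
          (U * diagonal (fun i => (d i + κ)⁻¹) * star U)
        = U * (diagonal (fun i => d i + κ) * ((star U * U) *
            diagonal (fun i => (d i + κ)⁻¹))) * star U := by noncomm_ring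
      _ = 1 := by
          rw [hU'U, one_mul, Matrix.diagonal_mul_diagonal]
          have : (fun i => (d i + κ) * (d i + κ)⁻¹) = fun _ => (1:ℝ) := by
            funext i; exact mul_inv_cancel₀ (hd i)
          rw [this, Matrix.diagonal_one, Matrix.mul_one, hUU]
  rw [hinv]
  have : U * diagonal d * star U * (U * diagonal (fun i => (d i + κ)⁻¹) * star U)
      = U * (diagonal d * ((star U * U) * diagonal (fun i => (d i + κ)⁻¹))) * star U := by
    noncomm_ring
  rw [this, hU'U, one_mul, Matrix.diagonal_mul_diagonal, Matrix.trace_mul_comm,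
    ← Matrix.mul_assoc, hU'U, one_mul, Matrix.trace_diagonal]
  simp [div_eq_mul_inv]

lemma trace_eig {n : ℕ} {A : Matrix (Fin n) (Fin n) ℝ} (hA : A.IsHermitian) (κ : ℝ)
    (hκ : ∀ i, hA.eigenvalues i + κ ≠ 0) :
    (A * (A + κ • (1 : Matrix (Fin n) (Fin n) ℝ))⁻¹).trace
      = ∑ i, hA.eigenvalues i / (hA.eigenvalues i + κ) := by
  refine trace_conj (hA.eigenvectorUnitary : Matrix (Fin n) (Fin n) ℝ)
    ((Matrix.mem_unitaryGroup_iff).mp (hA.eigenvectorUnitary).2)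
    ((Matrix.mem_unitaryGroup_iff').mp (hA.eigenvectorUnitary).2)
    hA.eigenvalues κ hκ A ?_
  have := hA.spectral_theorem
  simpa using this

lemma trace_eq_sum_eig {n : ℕ} {A : Matrix (Fin n) (Fin n) ℝ} (hA : A.IsHermitian) :
    A.trace = ∑ i, hA.eigenvalues i := by
  have hU'U : star (hA.eigenvectorUnitary : Matrix (Fin n) (Fin n) ℝ) * hA.eigenvectorUnitary = 1 :=
    (Matrix.mem_unitaryGroup_iff').mp (hA.eigenvectorUnitary).2
  conv_lhs => rw [hA.spectral_theorem]
  rw [Unitary.conjStarAlgAut_apply]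
  rw [Matrix.trace_mul_comm, ← Matrix.mul_assoc, hU'U, one_mul]
  simp [Matrix.trace_diagonal]

lemma df1_eq {n : ℕ} {A : Matrix (Fin n) (Fin n) ℝ} (hA : A.PosSemidef) {κ : ℝ} (hκ : 0 < κ) :
    df1 A κ = (1 / (n : ℝ)) * ∑ i, hA.1.eigenvalues i / (hA.1.eigenvalues i + κ) := by
  rw [df1, trace_eig hA.1 κ (fun i => by have := hA.eigenvalues_nonneg i; positivity)]

lemma df1_mono {n : ℕ} {A : Matrix (Fin n) (Fin n) ℝ} (hA : A.PosSemidef) {κ1 κ2 : ℝ}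
    (hκ1 : 0 < κ1) (h12 : κ1 ≤ κ2) : df1 A κ2 ≤ df1 A κ1 := by
  have hκ2 : 0 < κ2 := lt_of_lt_of_le hκ1 h12
  rw [df1_eq hA hκ1, df1_eq hA hκ2]
  have hn : (0:ℝ) ≤ 1 / (n:ℝ) := by positivity
  apply mul_le_mul_of_nonneg_left _ hn
  apply Finset.sum_le_sum
  intro i _
  have h0 := hA.eigenvalues_nonneg i
  gcongr

lemma df1_le_jensen {T : ℕ} {K : Matrix (Fin T) (Fin T) ℝ} (hK : K.PosDef) (hT : 0 < T)
    (htr : (1 / (T : ℝ)) * K.trace = 1) {κ : ℝ} (hκ : 0 < κ) :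
    df1 K κ ≤ 1 / (1 + κ) := by
  have hTpos : (0:ℝ) < T := by exact_mod_cast hT
  have hsum : ∑ i, hK.1.eigenvalues i = (T:ℝ) := by
    have := trace_eq_sum_eig hK.1
    rw [this] at htr
    field_simp at htr
    linarith
  rw [df1_eq hK.posSemidef hκ]
  have hbound : ∑ i, hK.1.eigenvalues i / (hK.1.eigenvalues i + κ)
      ≤ ∑ i, (1 + hK.1.eigenvalues i * κ) / (1 + κ)^2 := by
    apply Finset.sum_le_sum
    intro i _
    have h0 := hK.posSemidef.eigenvalues_nonneg i
    rw [div_le_div_iff₀ (by positivity) (by positivity)]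
    nlinarith [sq_nonneg (hK.1.eigenvalues i - 1), hκ.le, h0]
  have hsum2 : ∑ i, (1 + hK.1.eigenvalues i * κ) / (1 + κ)^2 = (T:ℝ) / (1 + κ) := by
    rw [← Finset.sum_div, Finset.sum_add_distrib, ← Finset.sum_mul, hsum]
    simp only [Finset.sum_const, Finset.card_univ, Fintype.card_fin, nsmul_eq_mul, mul_one]
    field_simp
  calc (1 / (T:ℝ)) * ∑ i, hK.1.eigenvalues i / (hK.1.eigenvalues i + κ)
      ≤ (1 / (T:ℝ)) * ((T:ℝ) / (1 + κ)) := by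
        apply mul_le_mul_of_nonneg_left _ (by positivity)
        rw [← hsum2]; exact hbound
    _ = 1 / (1 + κ) := by field_simp

/-- the presence of correlations decreases (or keeps constant) the first
degrees of freedom: `df¹_Σ(κ_c) ≤ df¹_Σ(κ_u)`. -/
theorem stmt4 {N T : ℕ} (Sg : Matrix (Fin N) (Fin N) ℝ) (hSg : Sg.PosSemidef)
    (hSg0 : Sg ≠ 0)
    (K : Matrix (Fin T) (Fin T) ℝ) (hK : K.PosDef)
    (htr : (1 / (T : ℝ)) * K.trace = 1)
    (q lam κc κtc κu : ℝ) (hq : 0 < q) (hlam : 0 < lam)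
    (hκc : 0 < κc) (hκtc : 0 < κtc)
    (h1 : df1 K κtc = q * df1 Sg κc)
    (h2 : κc * κtc * (q * df1 Sg κc) = lam)
    (hκu : 0 < κu) (h3 : κu * (1 - q * df1 Sg κu) = lam) :
    df1 Sg κc ≤ df1 Sg κu := by
  have hT : 0 < T := by
    rcases Nat.eq_zero_or_pos T with hT0 | hT0
    · subst hT0
      simp [Matrix.trace] at htr
    · exact hT0
  set dc := df1 Sg κc with hdc
  set du := df1 Sg κu with hdu
  have hKd : q * dc ≤ 1 / (1 + κtc) := h1 ▸ df1_le_jensen hK hT htr hκtc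
  have h1κ : (0:ℝ) < 1 + κtc := by linarith
  have hmul : (q * dc) * (1 + κtc) ≤ 1 := by
    rw [le_div_iff₀ h1κ] at hKd; exact hKd
  have key : lam ≤ κc * (1 - q * dc) := by nlinarith [h2]
  have h1mqdc : 0 < 1 - q * dc := by nlinarith
  by_contra hcon
  push_neg at hcon
  have hκlt : κc < κu := by
    by_contra hge
    push_neg at hge
    exact absurd (df1_mono hSg hκu hge) (not_le.mpr hcon)
  have hstep1 : κc * (1 - q * dc) < κu * (1 - q * dc) :=
    mul_lt_mul_of_pos_right hκlt h1mqdc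
  have hstep2 : κu * (1 - q * dc) < κu * (1 - q * du) := by
    apply mul_lt_mul_of_pos_left _ hκu
    nlinarith
  linarith [h3]
end

section
/- Let Σ be a nonzero real symmetric positive-semidefinite N×N matrix, let K be a real symmetric positive-definite T×T matrix with (1/T)·Tr(K) = 1, and let q > 0 and λ > 0. Suppose κ_c > 0 and κ̃_c > 0 satisfy df¹_K(κ̃_c) = q·df¹_Σ(κ_c) and κ_c·κ̃_c·q·df¹_Σ(κ_c) = λ, and suppose κ_u > 0 satisfies κ_u·(1 − q·df¹_Σ(κ_u)) = λ. Then df²_Σ(κ_c) ≤ df²_Σ(κ_u): the presence of correlations decreases (or keeps constant) the second degrees of freedom. -/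
open Matrix

section helpers
variable {n : ℕ}

lemma conj_diag_mul (U : Matrix (Fin n) (Fin n) ℝ) (hU : star U * U = 1)
    (v w : Fin n → ℝ) :
    (U * diagonal v * star U) * (U * diagonal w * star U)
      = U * diagonal (fun i => v i * w i) * star U := by
  have h : diagonal v * ((star U * U) * diagonal w) = diagonal (fun i => v i * w i) := by
    rw [hU, one_mul, diagonal_mul_diagonal]
  calc (U * diagonal v * star U) * (U * diagonal w * star U)
      = U * (diagonal v * ((star U * U) * diagonal w)) * star U := by
        simp only [Matrix.mul_assoc]
    _ = U * diagonal (fun i => v i * w i) * star U := by rw [h]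

lemma trace_conj_diag (U : Matrix (Fin n) (Fin n) ℝ) (hU : star U * U = 1)
    (v : Fin n → ℝ) :
    (U * diagonal v * star U).trace = ∑ i, v i := by
  rw [Matrix.trace_mul_cycle, hU, Matrix.one_mul, Matrix.trace_diagonal]

lemma eig_decomp (A : Matrix (Fin n) (Fin n) ℝ) (hA : A.IsHermitian) :
    A = (hA.eigenvectorUnitary : Matrix (Fin n) (Fin n) ℝ) * diagonal hA.eigenvalues
        * star (hA.eigenvectorUnitary : Matrix (Fin n) (Fin n) ℝ) := by
  have h := hA.spectral_theorem
  rw [Unitary.conjStarAlgAut_apply] at h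
  convert h using 3
  · rfl
  · rfl
  · rfl

lemma df_sums (A : Matrix (Fin n) (Fin n) ℝ) (hA : A.PosSemidef) {κ : ℝ} (hκ : 0 < κ) :
    df1 A κ = (1 / (n:ℝ)) * ∑ i, hA.1.eigenvalues i / (hA.1.eigenvalues i + κ) ∧
    df2 A κ = (1 / (n:ℝ)) * ∑ i, (hA.1.eigenvalues i)^2 / (hA.1.eigenvalues i + κ)^2 := by
  set U : Matrix (Fin n) (Fin n) ℝ := (hA.1.eigenvectorUnitary : Matrix (Fin n) (Fin n) ℝ)
  set ev := hA.1.eigenvalues with hev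
  have hU1 : star U * U = 1 := Unitary.coe_star_mul_self _
  have hU2 : U * star U = 1 := Unitary.coe_mul_star_self _
  have hspec : A = U * diagonal ev * star U := eig_decomp A hA.1
  have hne : ∀ i, ev i + κ ≠ 0 := fun i => by
    have := hA.eigenvalues_nonneg i; positivity
  have h1 : U * diagonal (fun _ : Fin n => κ) * star U = κ • 1 := by
    rw [← Matrix.smul_one_eq_diagonal, Matrix.mul_smul, Matrix.mul_one, Matrix.smul_mul, hU2]
  have hAκ : A + κ • (1 : Matrix (Fin n) (Fin n) ℝ)
      = U * diagonal (fun i => ev i + κ) * star U := by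
    rw [hspec, ← h1, ← Matrix.add_mul, ← Matrix.mul_add, Matrix.diagonal_add]
  have hinv : (A + κ • (1 : Matrix (Fin n) (Fin n) ℝ))⁻¹
      = U * diagonal (fun i => (ev i + κ)⁻¹) * star U := by
    apply Matrix.inv_eq_right_inv
    rw [hAκ, conj_diag_mul U hU1]
    have h2 : (fun i => (ev i + κ) * (ev i + κ)⁻¹) = fun _ : Fin n => (1:ℝ) := by
      funext i; exact mul_inv_cancel₀ (hne i)
    rw [h2, Matrix.diagonal_one, Matrix.mul_one, hU2]
  constructor
  · rw [df1, hinv]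
    conv_lhs => rw [hspec]
    rw [conj_diag_mul U hU1, trace_conj_diag U hU1]
    congr 1
  · rw [df2, hinv]
    have hsq1 : A ^ 2 = U * diagonal (fun i => ev i * ev i) * star U := by
      rw [sq]
      conv_lhs => rw [hspec]
      rw [conj_diag_mul U hU1]
    have hsq2 : (U * diagonal (fun i => (ev i + κ)⁻¹) * star U) ^ 2
        = U * diagonal (fun i => (ev i + κ)⁻¹ * (ev i + κ)⁻¹) * star U := by
      rw [sq, conj_diag_mul U hU1]
    rw [hsq1, hsq2, conj_diag_mul U hU1, trace_conj_diag U hU1]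
    congr 1
    apply Finset.sum_congr rfl
    intro i _
    rw [pow_two, pow_two, div_eq_mul_inv, mul_inv]

lemma trace_eq_sum_ev (A : Matrix (Fin n) (Fin n) ℝ) (hA : A.IsHermitian) :
    A.trace = ∑ i, hA.eigenvalues i := by
  conv_lhs => rw [eig_decomp A hA]
  rw [trace_conj_diag _ (Unitary.coe_star_mul_self _)]

end helpers

lemma tangent_ineq {k κ : ℝ} (hk : 0 < k) (hκ : 0 < κ) :
    k / (k + κ) ≤ 1 / (1 + κ) + κ * (k - 1) / (1 + κ) ^ 2 := by
  have h1 : 0 < k + κ := by linarith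
  have h2 : 0 < 1 + κ := by linarith
  have key : (1 / (1 + κ) + κ * (k - 1) / (1 + κ) ^ 2) - k / (k + κ)
      = κ * (k - 1) ^ 2 / ((k + κ) * (1 + κ) ^ 2) := by
    field_simp
    ring
  nlinarith [div_nonneg (mul_nonneg hκ.le (sq_nonneg (k - 1)))
    (le_of_lt (by positivity : (0:ℝ) < (k + κ) * (1 + κ) ^ 2)), key]

lemma mono1_ineq {σ κ κ' : ℝ} (hσ : 0 ≤ σ) (h : 0 < κ) (h' : κ ≤ κ') :
    σ / (σ + κ') ≤ σ / (σ + κ) := by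
  have h1 : 0 < σ + κ := by linarith
  have h2 : σ + κ ≤ σ + κ' := by linarith
  exact div_le_div_of_nonneg_left hσ h1 h2

lemma mono2_ineq {σ κ κ' : ℝ} (hσ : 0 ≤ σ) (h : 0 < κ) (h' : κ ≤ κ') :
    σ ^ 2 / (σ + κ') ^ 2 ≤ σ ^ 2 / (σ + κ) ^ 2 := by
  have h1 : 0 < (σ + κ) ^ 2 := by positivity
  have h2 : (σ + κ) ^ 2 ≤ (σ + κ') ^ 2 := by nlinarith
  exact div_le_div_of_nonneg_left (sq_nonneg σ) h1 h2

/-- the presence of correlations decreases (or keeps constant) the second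
degrees of freedom: `df²_Σ(κ_c) ≤ df²_Σ(κ_u)`. -/
theorem stmt5 {N T : ℕ} (Sg : Matrix (Fin N) (Fin N) ℝ) (hSg : Sg.PosSemidef)
    (hSg0 : Sg ≠ 0)
    (K : Matrix (Fin T) (Fin T) ℝ) (hK : K.PosDef)
    (htr : (1 / (T : ℝ)) * K.trace = 1)
    (q lam κc κtc κu : ℝ) (hq : 0 < q) (hlam : 0 < lam)
    (hκc : 0 < κc) (hκtc : 0 < κtc)
    (h1 : df1 K κtc = q * df1 Sg κc)
    (h2 : κc * κtc * (q * df1 Sg κc) = lam)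
    (hκu : 0 < κu) (h3 : κu * (1 - q * df1 Sg κu) = lam) :
    df2 Sg κc ≤ df2 Sg κu := by
  -- eigenvalue notation
  set sv := hSg.1.eigenvalues with hsv
  set kv := hK.posSemidef.1.eigenvalues with hkv
  have hsv0 : ∀ i, 0 ≤ sv i := fun i => hSg.eigenvalues_nonneg i
  have hkv0 : ∀ i, 0 < kv i := fun i => hK.eigenvalues_pos i
  obtain ⟨hd1c, hd2c⟩ := df_sums Sg hSg hκc
  obtain ⟨hd1u, hd2u⟩ := df_sums Sg hSg hκu
  obtain ⟨hd1K, _⟩ := df_sums K hK.posSemidef hκtc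
  -- T ≠ 0
  have hT : (T : ℝ) ≠ 0 := by
    intro h
    have hT0 : T = 0 := by exact_mod_cast h
    subst hT0
    rw [Matrix.trace] at htr
    simp at htr
  -- sum of K eigenvalues equals T
  have hsum_k : ∑ i, kv i = (T : ℝ) := by
    have := trace_eq_sum_ev K hK.posSemidef.1
    rw [this] at htr
    field_simp at htr
    linarith [htr]
  -- Jensen (tangent line) : df1 K κtc ≤ 1/(1+κtc)
  have hJ : df1 K κtc ≤ 1 / (1 + κtc) := by
    rw [hd1K]
    have hstep : ∑ i, kv i / (kv i + κtc)
        ≤ ∑ i, (1 / (1 + κtc) + κtc * (kv i - 1) / (1 + κtc) ^ 2) :=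
      Finset.sum_le_sum fun i _ => tangent_ineq (hkv0 i) hκtc
    have hz : ∑ i, κtc * (kv i - 1) / (1 + κtc) ^ 2 = 0 := by
      rw [← Finset.sum_div, ← Finset.mul_sum]
      have h0 : ∑ i, (kv i - 1) = 0 := by
        rw [Finset.sum_sub_distrib, hsum_k]
        simp
      rw [h0, mul_zero, zero_div]
    have hcalc : ∑ i, (1 / (1 + κtc) + κtc * (kv i - 1) / (1 + κtc) ^ 2)
        = (T : ℝ) * (1 / (1 + κtc)) := by
      rw [Finset.sum_add_distrib, hz, add_zero, Finset.sum_const, Finset.card_univ,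
        Fintype.card_fin, nsmul_eq_mul]
    have hTpos : (0:ℝ) < (T:ℝ) := lt_of_le_of_ne (Nat.cast_nonneg T) (Ne.symm hT)
    calc (1 / (T:ℝ)) * ∑ i, kv i / (kv i + κtc)
        ≤ (1 / (T:ℝ)) * ((T:ℝ) * (1 / (1 + κtc))) := by
          apply mul_le_mul_of_nonneg_left _ (by positivity)
          rw [← hcalc]; exact hstep
      _ = 1 / (1 + κtc) := by field_simp
  -- abbreviation
  set x := q * df1 Sg κc with hx
  have hx0 : 0 ≤ x := by
    rw [hx, hd1c]
    apply mul_nonneg hq.le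
    apply mul_nonneg (by positivity)
    apply Finset.sum_nonneg
    intro i _
    exact div_nonneg (hsv0 i) (by have := hsv0 i; linarith)
  have hxle : x ≤ 1 / (1 + κtc) := h1 ▸ hJ
  have hx1 : x * (1 + κtc) ≤ 1 := by
    rw [← le_div_iff₀ (by positivity : (0:ℝ) < 1 + κtc)]
    exact hxle
  have hxlt1 : x < 1 := by
    have : 1 / (1 + κtc) < 1 := by
      rw [div_lt_one (by positivity)]
      linarith
    linarith
  -- lam ≤ κc (1 - x)
  have hlamle : lam ≤ κc * (1 - x) := by
    have : κc * (1 - x) - κc * κtc * x = κc * (1 - x * (1 + κtc)) := by ring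
    nlinarith [hκc.le]
  -- κu ≤ κc
  have hκuκc : κu ≤ κc := by
    by_contra hcon
    push_neg at hcon
    have hmono : df1 Sg κu ≤ df1 Sg κc := by
      rw [hd1u, hd1c]
      apply mul_le_mul_of_nonneg_left _ (by positivity)
      exact Finset.sum_le_sum fun i _ => mono1_ineq (hsv0 i) hκc hcon.le
    have hstep1 : κu * (1 - x) ≤ κu * (1 - q * df1 Sg κu) := by
      apply mul_le_mul_of_nonneg_left _ hκu.le
      have : q * df1 Sg κu ≤ x := by
        rw [hx]
        exact mul_le_mul_of_nonneg_left hmono hq.le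
      linarith
    have hstep2 : κc * (1 - x) < κu * (1 - x) :=
      mul_lt_mul_of_pos_right hcon (by linarith)
    linarith
  -- conclude: df2 monotone decreasing
  rw [hd2c, hd2u]
  apply mul_le_mul_of_nonneg_left _ (by positivity)
  exact Finset.sum_le_sum fun i _ => mono2_ineq (hsv0 i) hκu hκuκc
end

section
/- Let Σ be a nonzero real symmetric positive-semidefinite N×N matrix, let K be a real symmetric positive-definite T×T matrix with (1/T)·Tr(K) = 1, and let q > 0 and λ > 0. Suppose κ_c > 0 and κ̃_c > 0 satisfy df¹_K(κ̃_c) = q·df¹_Σ(κ_c) and κ_c·κ̃_c·q·df¹_Σ(κ_c) = λ, and suppose κ_u > 0 satisfies κ_u·(1 − q·df¹_Σ(κ_u)) = λ. Define κ̃_u = (1 − q·df¹_Σ(κ_u))/(q·df¹_Σ(κ_u)), the corresponding dual renormalized ridge for uncorrelated data. Then κ̃_c ≤ κ̃_u. -/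
open Matrix

lemma spectral_real {n : ℕ} (A : Matrix (Fin n) (Fin n) ℝ) (hA : A.IsHermitian) :
    A = (Matrix.IsHermitian.eigenvectorUnitary hA : Matrix (Fin n) (Fin n) ℝ) *
      diagonal hA.eigenvalues *
      star (Matrix.IsHermitian.eigenvectorUnitary hA : Matrix (Fin n) (Fin n) ℝ) := by
  have := hA.spectral_theorem
  simpa [RCLike.ofReal_real_eq_id] using this

lemma trace_eq_sum_eigenvalues {n : ℕ} (A : Matrix (Fin n) (Fin n) ℝ) (hA : A.IsHermitian) :
    A.trace = ∑ i, hA.eigenvalues i := by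
  classical
  conv_lhs => rw [spectral_real A hA]
  rw [Matrix.trace_mul_cycle,
    (Matrix.mem_unitaryGroup_iff').mp (Matrix.IsHermitian.eigenvectorUnitary hA).2,
    Matrix.one_mul, Matrix.trace_diagonal]

lemma df1_eq_sum {n : ℕ} (A : Matrix (Fin n) (Fin n) ℝ) (hA : A.PosSemidef) {κ : ℝ}
    (hκ : 0 < κ) :
    df1 A κ = (1 / (n : ℝ)) * ∑ i, hA.1.eigenvalues i / (hA.1.eigenvalues i + κ) := by
  classical
  set μ := hA.1.eigenvalues with hμ
  set U := (Matrix.IsHermitian.eigenvectorUnitary hA.1 : Matrix (Fin n) (Fin n) ℝ) with hU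
  have hUU : U * star U = 1 :=
    (Matrix.mem_unitaryGroup_iff).mp (Matrix.IsHermitian.eigenvectorUnitary hA.1).2
  have hUU' : star U * U = 1 :=
    (Matrix.mem_unitaryGroup_iff').mp (Matrix.IsHermitian.eigenvectorUnitary hA.1).2
  have hspec : A = U * diagonal μ * star U := spectral_real A hA.1
  have hpos : ∀ i, 0 < μ i + κ := fun i =>
    add_pos_of_nonneg_of_pos (hA.eigenvalues_nonneg i) hκ
  have key : A + κ • (1 : Matrix (Fin n) (Fin n) ℝ)
      = U * diagonal (fun i => μ i + κ) * star U := by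
    have : diagonal (fun i => μ i + κ) = diagonal μ + κ • 1 := by
      rw [Matrix.smul_one_eq_diagonal, ← Matrix.diagonal_add]
    rw [this, Matrix.mul_add, Matrix.add_mul, ← hspec]
    congr 1
    rw [Matrix.mul_smul, Matrix.mul_one, Matrix.smul_mul, hUU]
  have hinv : (A + κ • (1 : Matrix (Fin n) (Fin n) ℝ))⁻¹
      = U * diagonal (fun i => (μ i + κ)⁻¹) * star U := by
    apply Matrix.inv_eq_right_inv
    rw [key]
    calc U * diagonal (fun i => μ i + κ) * star U * (U * diagonal (fun i => (μ i + κ)⁻¹) * star U)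
        = U * (diagonal (fun i => μ i + κ) * (star U * U) * diagonal (fun i => (μ i + κ)⁻¹)) * star U := by
          noncomm_ring
      _ = 1 := by
          rw [hUU', Matrix.mul_one, Matrix.diagonal_mul_diagonal]
          have : (fun i => (μ i + κ) * (μ i + κ)⁻¹) = fun _ => (1 : ℝ) := by
            funext i; exact mul_inv_cancel₀ (hpos i).ne'
          rw [this, Matrix.diagonal_one, Matrix.mul_one, hUU]
  have htr : (A * (A + κ • (1 : Matrix (Fin n) (Fin n) ℝ))⁻¹).trace
      = ∑ i, μ i * (μ i + κ)⁻¹ := by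
    rw [hinv]
    conv_lhs => rw [hspec]
    have : U * diagonal μ * star U * (U * diagonal (fun i => (μ i + κ)⁻¹) * star U)
        = U * (diagonal μ * (star U * U) * diagonal (fun i => (μ i + κ)⁻¹)) * star U := by
      noncomm_ring
    rw [this, hUU', Matrix.mul_one, Matrix.diagonal_mul_diagonal,
      Matrix.trace_mul_cycle, hUU', Matrix.one_mul, Matrix.trace_diagonal]
  rw [df1, htr]
  simp [div_eq_mul_inv]

/-- with `κ̃_u = (1 − q·df¹_Σ(κ_u))/(q·df¹_Σ(κ_u))` the dual renormalized
ridge for uncorrelated data, one has `κ̃_c ≤ κ̃_u`. -/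
theorem stmt6 {N T : ℕ} (Sg : Matrix (Fin N) (Fin N) ℝ) (hSg : Sg.PosSemidef)
    (hSg0 : Sg ≠ 0)
    (K : Matrix (Fin T) (Fin T) ℝ) (hK : K.PosDef)
    (htr : (1 / (T : ℝ)) * K.trace = 1)
    (q lam κc κtc κu : ℝ) (hq : 0 < q) (hlam : 0 < lam)
    (hκc : 0 < κc) (hκtc : 0 < κtc)
    (h1 : df1 K κtc = q * df1 Sg κc)
    (h2 : κc * κtc * (q * df1 Sg κc) = lam)
    (hκu : 0 < κu) (h3 : κu * (1 - q * df1 Sg κu) = lam) :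
    κtc ≤ (1 - q * df1 Sg κu) / (q * df1 Sg κu) := by
  classical
  set μS := hSg.1.eigenvalues with hμS
  set μK := hK.posSemidef.1.eigenvalues with hμK
  have hT : 0 < (T : ℝ) := by
    rcases Nat.eq_zero_or_pos T with h | h
    · exfalso
      have hz : (T : ℝ) = 0 := by simp [h]
      rw [hz, div_zero, zero_mul] at htr
      exact one_ne_zero htr.symm
    · exact_mod_cast h
  have hN : 0 < (N : ℝ) := by
    rcases Nat.eq_zero_or_pos N with h | h
    · exfalso; apply hSg0; subst h; exact Subsingleton.elim _ _
    · exact_mod_cast h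
  have hμSnn : ∀ i, 0 ≤ μS i := fun i => hSg.eigenvalues_nonneg i
  have hμSne : ∃ i, 0 < μS i := by
    by_contra h
    push_neg at h
    have hz : μS = 0 := funext fun i => le_antisymm (h i) (hμSnn i)
    apply hSg0
    have := spectral_real Sg hSg.1
    rw [← hμS, hz] at this
    have hd0 : diagonal (0 : Fin N → ℝ) = 0 := by
      ext i j; simp [Matrix.diagonal]
    rwa [hd0, Matrix.mul_zero, Matrix.zero_mul] at this
  -- positivity of df1 Sg
  have hdfpos : ∀ κ : ℝ, 0 < κ → 0 < df1 Sg κ := by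
    intro κ hκ
    rw [df1_eq_sum Sg hSg hκ, ← hμS]
    apply mul_pos (by positivity)
    obtain ⟨i, hi⟩ := hμSne
    refine Finset.sum_pos'
      (fun j _ => div_nonneg (hμSnn j) (add_pos_of_nonneg_of_pos (hμSnn j) hκ).le)
      ⟨i, Finset.mem_univ i, div_pos hi (add_pos_of_nonneg_of_pos (hμSnn i) hκ)⟩
  -- df1 Sg is antitone
  have hanti : ∀ κ1 κ2 : ℝ, 0 < κ1 → κ1 ≤ κ2 → df1 Sg κ2 ≤ df1 Sg κ1 := by
    intro κ1 κ2 hκ1 h12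
    rw [df1_eq_sum Sg hSg hκ1, df1_eq_sum Sg hSg (lt_of_lt_of_le hκ1 h12), ← hμS]
    refine mul_le_mul_of_nonneg_left (Finset.sum_le_sum fun i _ => ?_) (by positivity)
    exact div_le_div_of_nonneg_left (hμSnn i)
      (add_pos_of_nonneg_of_pos (hμSnn i) hκ1) (by linarith)
  -- κ ↦ κ·df1 Sg κ is monotone
  have hmono : ∀ κ1 κ2 : ℝ, 0 < κ1 → κ1 ≤ κ2 → κ1 * df1 Sg κ1 ≤ κ2 * df1 Sg κ2 := by
    intro κ1 κ2 hκ1 h12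
    have hκ2 : 0 < κ2 := lt_of_lt_of_le hκ1 h12
    rw [df1_eq_sum Sg hSg hκ1, df1_eq_sum Sg hSg hκ2, ← hμS]
    have e : ∀ κ : ℝ, κ * ((1 / (N : ℝ)) * ∑ i, μS i / (μS i + κ))
        = (1 / (N : ℝ)) * ∑ i, κ * (μS i / (μS i + κ)) := by
      intro κ; rw [← Finset.mul_sum]; ring
    rw [e κ1, e κ2]
    refine mul_le_mul_of_nonneg_left (Finset.sum_le_sum fun i _ => ?_) (by positivity)
    have h1' : 0 < μS i + κ1 := add_pos_of_nonneg_of_pos (hμSnn i) hκ1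
    have h2' : 0 < μS i + κ2 := add_pos_of_nonneg_of_pos (hμSnn i) hκ2
    rw [← mul_div_assoc, ← mul_div_assoc, div_le_div_iff₀ h1' h2']
    nlinarith [mul_nonneg (sub_nonneg.mpr h12) (mul_self_nonneg (μS i)), hμSnn i]
  -- Jensen-type bound: df1 K κtc ≤ 1/(1+κtc)
  have htrK : K.trace = (T : ℝ) := by
    field_simp at htr
    linarith
  have hμKpos : ∀ i, 0 < μK i := fun i => hK.eigenvalues_pos i
  have hsumμK : ∑ i, μK i = (T : ℝ) := by
    have h := trace_eq_sum_eigenvalues K hK.posSemidef.1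
    rw [htrK] at h
    exact h.symm
  have h1κ : (0 : ℝ) < 1 + κtc := by linarith
  have hjensen : df1 K κtc ≤ 1 / (1 + κtc) := by
    rw [df1_eq_sum K hK.posSemidef hκtc, ← hμK]
    have hc : ∀ i, 0 < μK i + κtc := fun i => by have := hμKpos i; linarith
    have hCS : ((T : ℝ)) ^ 2 ≤ (∑ i, (μK i + κtc)) * ∑ i, (μK i + κtc)⁻¹ := by
      have := Finset.sum_sq_le_sum_mul_sum_of_sq_eq_mul (Finset.univ (α := Fin T))
        (r := fun _ => (1 : ℝ)) (f := fun i => μK i + κtc) (g := fun i => (μK i + κtc)⁻¹)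
        (fun i _ => (hc i).le) (fun i _ => (inv_nonneg.mpr (hc i).le))
        (fun i _ => by rw [one_pow, mul_inv_cancel₀ (hc i).ne'])
      simpa using this
    have hsumc : ∑ i, (μK i + κtc) = (T : ℝ) * (1 + κtc) := by
      rw [Finset.sum_add_distrib, hsumμK]
      simp [mul_add]
    rw [hsumc] at hCS
    have hinvsum : (T : ℝ) / (1 + κtc) ≤ ∑ i, (μK i + κtc)⁻¹ := by
      rw [div_le_iff₀ h1κ]
      nlinarith
    have hterm : ∀ i, μK i / (μK i + κtc) = 1 - κtc * (μK i + κtc)⁻¹ := by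
      intro i
      have hne : μK i + κtc ≠ 0 := (hc i).ne'
      field_simp
      ring
    calc (1 / (T : ℝ)) * ∑ i, μK i / (μK i + κtc)
        = (1 / (T : ℝ)) * ((T : ℝ) - κtc * ∑ i, (μK i + κtc)⁻¹) := by
          simp_rw [hterm]
          rw [Finset.sum_sub_distrib, ← Finset.mul_sum, Finset.sum_const,
            Finset.card_univ, Fintype.card_fin, nsmul_eq_mul, mul_one]
      _ ≤ (1 / (T : ℝ)) * ((T : ℝ) - κtc * ((T : ℝ) / (1 + κtc))) := by
          apply mul_le_mul_of_nonneg_left _ (by positivity)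
          nlinarith
      _ = 1 / (1 + κtc) := by
          have hTne : (T : ℝ) ≠ 0 := hT.ne'
          have h1ne : (1 : ℝ) + κtc ≠ 0 := h1κ.ne'
          have e : (T : ℝ) - κtc * ((T : ℝ) / (1 + κtc)) = (T : ℝ) / (1 + κtc) := by
            field_simp
            ring
          rw [e, one_div, ← mul_div_assoc, inv_mul_cancel₀ hTne]
  -- main argument
  obtain ⟨dc, hdc⟩ : ∃ x, df1 Sg κc = x := ⟨_, rfl⟩
  obtain ⟨du, hdu⟩ : ∃ x, df1 Sg κu = x := ⟨_, rfl⟩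
  have hdcpos : 0 < dc := hdc ▸ hdfpos κc hκc
  have hdupos : 0 < du := hdu ▸ hdfpos κu hκu
  have hmono' : κu ≤ κc → κu * du ≤ κc * dc := fun h => hdc ▸ hdu ▸ hmono κu κc hκu h
  have hanti' : κc ≤ κu → du ≤ dc := fun h => hdc ▸ hdu ▸ hanti κc κu hκc h
  rw [hdc] at h1 h2
  rw [hdu] at h3 ⊢
  have hb : q * dc ≤ 1 / (1 + κtc) := h1 ▸ hjensen
  have hb' : q * dc * (1 + κtc) ≤ 1 := by
    rw [le_div_iff₀ h1κ] at hb
    linarith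
  clear hb hdc hdu h1 hjensen hdfpos hanti hmono hμSne hμSnn hμKpos hsumμK htrK htr hSg0
  have hlamle : lam ≤ κc * (1 - q * dc) := by nlinarith
  have h1gu : 0 < 1 - q * du := by nlinarith
  have hκuκc : κu ≤ κc := by
    by_contra h
    push_neg at h
    have hgle : du ≤ dc := hanti' h.le
    have e1 : κc * (1 - q * dc) ≤ κc * (1 - q * du) := by
      nlinarith [mul_nonneg (mul_nonneg hκc.le hq.le) (sub_nonneg.mpr hgle)]
    have e2 : κc * (1 - q * du) < κu * (1 - q * du) :=
      mul_lt_mul_of_pos_right h h1gu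
    linarith
  have hq'' : κu * du ≤ κc * dc := hmono' hκuκc
  have hgu : 0 < q * du := mul_pos hq hdupos
  rw [le_div_iff₀ hgu]
  -- goal : κtc * (q * du) ≤ 1 - q * du
  have hfin : κu * (κtc * (q * du)) ≤ κu * (1 - q * du) := by
    nlinarith [mul_le_mul_of_nonneg_left hq'' (mul_nonneg hκtc.le hq.le)]
  nlinarith [hfin, mul_pos hκu (mul_pos hκtc hgu)]
end

section
/- Let Σ be a nonzero real symmetric positive-semidefinite N×N matrix, K a real symmetric positive-definite T×T matrix, and q > 0. Suppose κ, κ̃ : (0,∞) → (0,∞) are differentiable functions satisfying, for all λ > 0, both df¹_K(κ̃(λ)) = q·df¹_Σ(κ(λ)) and κ(λ)·κ̃(λ)·q·df¹_Σ(κ(λ)) = λ. Then for every λ > 0, writing df₁ = df¹_Σ(κ(λ)), df₂ = df²_Σ(κ(λ)), df̃₁ = df¹_K(κ̃(λ)), df̃₂ = df²_K(κ̃(λ)), and γ = (df₂/df₁)·(df̃₂/df̃₁), one has κ′(λ) = (κ(λ)/λ) · (1 − df̃₂/df̃₁)/(1 − γ). -/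
open Matrix

attribute [local instance] Matrix.linftyOpNormedRing Matrix.linftyOpNormedAlgebra

section test
variable {n : ℕ}

noncomputable instance : CompleteSpace (Matrix (Fin n) (Fin n) ℝ) :=
  FiniteDimensional.complete ℝ _

lemma shifted_posDef {n : ℕ} {A : Matrix (Fin n) (Fin n) ℝ} (hA : A.PosSemidef) {κ : ℝ}
    (hκ : 0 < κ) : (A + κ • (1 : Matrix (Fin n) (Fin n) ℝ)).PosDef := by
  apply Matrix.PosDef.posSemidef_add hA
  rw [smul_one_eq_diagonal]
  exact Matrix.PosDef.diagonal (fun i => hκ)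

lemma resolvent_hasDerivAt {n : ℕ} {A : Matrix (Fin n) (Fin n) ℝ} (hA : A.PosSemidef) {κ : ℝ}
    (hκ : 0 < κ) :
    HasDerivAt (fun x : ℝ => (A + x • (1 : Matrix (Fin n) (Fin n) ℝ))⁻¹)
      (-((A + κ • 1)⁻¹ * (A + κ • 1)⁻¹)) κ := by
  set B := (A + κ • (1 : Matrix (Fin n) (Fin n) ℝ))⁻¹ with hB
  have hu : IsUnit (A + κ • (1 : Matrix (Fin n) (Fin n) ℝ)) := (shifted_posDef hA hκ).isUnit
  obtain ⟨u, hu⟩ := hu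
  have hg : HasDerivAt (fun x : ℝ => A + x • (1 : Matrix (Fin n) (Fin n) ℝ))
      ((1:ℝ) • (1 : Matrix (Fin n) (Fin n) ℝ)) κ :=
    ((hasDerivAt_id κ).smul_const _).const_add A
  have h1 : HasDerivAt (fun x : ℝ => Ring.inverse (A + x • (1 : Matrix (Fin n) (Fin n) ℝ)))
      ((-ContinuousLinearMap.mulLeftRight ℝ (Matrix (Fin n) (Fin n) ℝ) ↑u⁻¹ ↑u⁻¹) ((1:ℝ) • (1:Matrix (Fin n) (Fin n) ℝ))) κ := by
    have h0 := hasFDerivAt_ringInverse (𝕜 := ℝ) u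
    rw [hu] at h0
    exact h0.comp_hasDerivAt κ hg
  have hinv : (↑u⁻¹ : Matrix (Fin n) (Fin n) ℝ) = B := by
    rw [hB, ← hu, Matrix.coe_units_inv]
  simp only [one_smul, ContinuousLinearMap.neg_apply, ContinuousLinearMap.mulLeftRight_apply,
    mul_one, hinv] at h1
  convert h1 using 2 with x
  rw [Matrix.nonsing_inv_eq_ringInverse]

end test

section test2
variable {n : ℕ}

noncomputable def traceL (n : ℕ) (A : Matrix (Fin n) (Fin n) ℝ) : Matrix (Fin n) (Fin n) ℝ →L[ℝ] ℝ :=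
  LinearMap.toContinuousLinearMap
  { toFun := fun M => (1 / (n : ℝ)) * (A * M).trace
    map_add' := by intro M N; simp only [Matrix.mul_add, Matrix.trace_add]; ring
    map_smul' := by intro c M; simp only [Matrix.mul_smul, Matrix.trace_smul,
      smul_eq_mul, RingHom.id_apply]; ring }

lemma df1_hasDerivAt {n : ℕ} {A : Matrix (Fin n) (Fin n) ℝ} (hA : A.PosSemidef) {κ : ℝ}
    (hκ : 0 < κ) :
    HasDerivAt (fun x : ℝ => df1 A x) ((df2 A κ - df1 A κ) / κ) κ := by
  set B := (A + κ • (1 : Matrix (Fin n) (Fin n) ℝ))⁻¹ with hBdef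
  have hPD := shifted_posDef hA hκ
  have h1 : HasDerivAt (fun x : ℝ => df1 A x) (traceL n A (-(B * B))) κ := by
    have := ((traceL n A).hasFDerivAt).comp_hasDerivAt κ (resolvent_hasDerivAt hA hκ)
    exact this
  -- key algebraic identities
  have hmul : (A + κ • (1 : Matrix (Fin n) (Fin n) ℝ)) * B = 1 :=
    Matrix.mul_nonsing_inv _ (hPD.det_pos.ne'.isUnit)
  have hAB : A * B = 1 - κ • B := by
    have : A * B + κ • B = 1 := by
      rw [← hmul, Matrix.add_mul, Matrix.smul_mul, Matrix.one_mul]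
    rw [← this]; abel
  have hABB : A * (B * B) = B - κ • (B * B) := by
    rw [← Matrix.mul_assoc, hAB, Matrix.sub_mul, Matrix.one_mul, Matrix.smul_mul]
  have hA2B2 : A ^ 2 * B ^ 2 = (1 - κ • B) - κ • (B - κ • (B * B)) := by
    rw [pow_two, pow_two, Matrix.mul_assoc A A, hABB, Matrix.mul_sub, hAB, Matrix.mul_smul, hABB]
  have htr1 : (A * B).trace = (n : ℝ) - κ * B.trace := by
    rw [hAB, Matrix.trace_sub, Matrix.trace_smul, Matrix.trace_one]
    simp [smul_eq_mul]
  have htrABB : (A * (B * B)).trace = B.trace - κ * (B * B).trace := by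
    rw [hABB, Matrix.trace_sub, Matrix.trace_smul]; simp [smul_eq_mul]
  have htr2 : (A ^ 2 * B ^ 2).trace = (n : ℝ) - 2 * κ * B.trace + κ ^ 2 * (B * B).trace := by
    rw [hA2B2, Matrix.trace_sub, Matrix.trace_sub, Matrix.trace_smul, Matrix.trace_smul,
      Matrix.trace_sub, Matrix.trace_smul, Matrix.trace_one]
    simp [smul_eq_mul]; ring
  have hval : traceL n A (-(B * B)) = (df2 A κ - df1 A κ) / κ := by
    have hd1 : df1 A κ = (1 / (n : ℝ)) * (A * B).trace := rfl
    have hd2 : df2 A κ = (1 / (n : ℝ)) * (A ^ 2 * B ^ 2).trace := rfl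
    have hL : traceL n A (-(B * B)) = (1 / (n : ℝ)) * (A * -(B * B)).trace := rfl
    rw [hL, Matrix.mul_neg, Matrix.trace_neg, htrABB, hd1, hd2, htr1, htr2]
    field_simp
    ring
  rw [← hval]; exact h1

end test2

section test3

lemma posDef_conj {n : ℕ} {M B : Matrix (Fin n) (Fin n) ℝ} (hM : M.PosDef) (hB : IsUnit B) :
    (Bᴴ * M * B).PosDef := by
  refine Matrix.PosDef.of_dotProduct_mulVec_pos (Matrix.isHermitian_conjTranspose_mul_mul B hM.1) fun x hx => ?_
  have hx' : B *ᵥ x ≠ 0 := by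
    have hinj := Matrix.mulVec_injective_iff_isUnit.mpr hB
    intro h
    exact hx (hinj (by rw [h, Matrix.mulVec_zero]))
  have h2 := hM.dotProduct_mulVec_pos hx'
  have heq : star x ⬝ᵥ (Bᴴ * M * B) *ᵥ x = star (B *ᵥ x) ⬝ᵥ M *ᵥ (B *ᵥ x) := by
    rw [← Matrix.mulVec_mulVec, ← Matrix.mulVec_mulVec, Matrix.dotProduct_mulVec (star x),
      ← Matrix.star_mulVec]
  rw [heq]; exact h2

lemma trace_pos_of_posDef {n : ℕ} (hn : n ≠ 0) {M : Matrix (Fin n) (Fin n) ℝ}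
    (hM : M.PosDef) : 0 < M.trace := by
  rw [Matrix.trace]
  apply Finset.sum_pos
  · intro i _
    have h := hM.dotProduct_mulVec_pos (x := Pi.single i 1) (by
      intro h
      have := congrFun h i
      simp at this)
    simpa using h
  · have : Nonempty (Fin n) := ⟨⟨0, Nat.pos_of_ne_zero hn⟩⟩
    exact Finset.univ_nonempty

lemma df_gap_pos {T : ℕ} (hT : T ≠ 0) {K : Matrix (Fin T) (Fin T) ℝ} (hK : K.PosDef) {κ : ℝ}
    (hκ : 0 < κ) : df2 K κ < df1 K κ := by
  set B := (K + κ • (1 : Matrix (Fin T) (Fin T) ℝ))⁻¹ with hBdef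
  have hPD := shifted_posDef hK.posSemidef hκ
  have hmul : (K + κ • (1 : Matrix (Fin T) (Fin T) ℝ)) * B = 1 :=
    Matrix.mul_nonsing_inv _ (hPD.det_pos.ne'.isUnit)
  have hAB : K * B = 1 - κ • B := by
    have h : K * B + κ • B = 1 := by
      rw [← hmul, Matrix.add_mul, Matrix.smul_mul, Matrix.one_mul]
    rw [← h]; abel
  have hABB : K * (B * B) = B - κ • (B * B) := by
    rw [← Matrix.mul_assoc, hAB, Matrix.sub_mul, Matrix.one_mul, Matrix.smul_mul]
  have hA2B2 : K ^ 2 * B ^ 2 = (1 - κ • B) - κ • (B - κ • (B * B)) := by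
    rw [pow_two, pow_two, Matrix.mul_assoc K K, hABB, Matrix.mul_sub, hAB, Matrix.mul_smul, hABB]
  have htr1 : (K * B).trace = (T : ℝ) - κ * B.trace := by
    rw [hAB, Matrix.trace_sub, Matrix.trace_smul, Matrix.trace_one]
    simp [smul_eq_mul]
  have htrABB : (K * (B * B)).trace = B.trace - κ * (B * B).trace := by
    rw [hABB, Matrix.trace_sub, Matrix.trace_smul]; simp [smul_eq_mul]
  have htr2 : (K ^ 2 * B ^ 2).trace = (T : ℝ) - 2 * κ * B.trace + κ ^ 2 * (B * B).trace := by
    rw [hA2B2, Matrix.trace_sub, Matrix.trace_sub, Matrix.trace_smul, Matrix.trace_smul,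
      Matrix.trace_sub, Matrix.trace_smul, Matrix.trace_one]
    simp [smul_eq_mul]; ring
  have hBH : Bᴴ = B := (hPD.inv).1
  have htrpos : 0 < (K * (B * B)).trace := by
    have h1 : (Bᴴ * K * B).PosDef := posDef_conj hK hPD.inv.isUnit
    have h2 : 0 < (Bᴴ * K * B).trace := trace_pos_of_posDef hT h1
    rw [hBH] at h2
    have h3 : (K * (B * B)).trace = (B * K * B).trace := by
      rw [← Matrix.mul_assoc, Matrix.trace_mul_comm (K * B) B, ← Matrix.mul_assoc]
    rw [h3]; exact h2
  have hd1 : df1 K κ = (1 / (T : ℝ)) * (K * B).trace := rfl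
  have hd2 : df2 K κ = (1 / (T : ℝ)) * (K ^ 2 * B ^ 2).trace := rfl
  have hTpos : (0 : ℝ) < T := by exact_mod_cast Nat.pos_of_ne_zero hT
  rw [htrABB] at htrpos
  rw [hd1, hd2, htr1, htr2]
  have h4 := mul_pos hκ htrpos
  have h5 : (0:ℝ) < 1 / (T:ℝ) := by positivity
  nlinarith [mul_pos h5 h4]

end test3

lemma alg_main (a b a' b' d1 d2 e1 e2 q lam : ℝ)
    (ha : a ≠ 0) (hb : b ≠ 0) (hq : q ≠ 0) (hlam : lam ≠ 0)
    (hM : e1 = q * d1) (hD : a * b * (q * d1) = lam)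
    (heq1 : a' * b * e1 + a * e2 * b' = 1)
    (hfact2 : a * (e2 - e1) * b' = q * (d2 - d1) * b * a')
    (hP : e2 < e1) :
    a' = (a / lam) * ((1 - e2 / e1) / (1 - (d2 / d1) * (e2 / e1))) := by
  have hd1 : d1 ≠ 0 := by
    intro h; apply hlam; rw [← hD, h]; ring
  have he1 : e1 ≠ 0 := by rw [hM]; exact mul_ne_zero hq hd1
  have hX : e2 - e1 ≠ 0 := sub_ne_zero.mpr hP.ne
  have key : a' * (b * (q * d2 * e2 - e1 ^ 2)) = e2 - e1 := by
    apply mul_left_cancel₀ ha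
    linear_combination (a * (e2 - e1)) * heq1 - (a * e2) * hfact2 - (a * a' * b * e2) * hM
  have hW : q * d2 * e2 - e1 ^ 2 ≠ 0 := by
    intro h
    apply hX
    rw [← key, h, mul_zero, mul_zero]
  have hden : 1 - d2 / d1 * (e2 / e1) ≠ 0 := by
    intro h
    apply hW
    have h2 : d2 * e2 = d1 * e1 := by
      field_simp at h
      linarith
    calc q * d2 * e2 - e1 ^ 2 = q * (d2 * e2) - e1 ^ 2 := by ring
      _ = q * (d1 * e1) - e1 ^ 2 := by rw [h2]
      _ = (q * d1) * e1 - e1 ^ 2 := by ring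
      _ = e1 * e1 - e1 ^ 2 := by rw [← hM]
      _ = 0 := by ring
  have hne : d1 * e1 - d2 * e2 ≠ 0 := by
    intro h
    apply hW
    linear_combination (-q) * h - e1 * hM
  have ha' : a' = (e2 - e1) / (b * (q * d2 * e2 - e1 ^ 2)) :=
    eq_div_of_mul_eq (mul_ne_zero hb hW) key
  rw [ha', ← hD]
  field_simp
  rw [div_eq_div_iff (by intro h; apply hW; linear_combination h) (by intro h; apply hne; linear_combination h)]
  linear_combination ((e1 - e2) * e1) * hM

/-- if differentiable `κ, κ̃ : (0,∞) → (0,∞)` satisfy the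
degrees-of-freedom matching relation `df¹_K(κ̃(λ)) = q·df¹_Σ(κ(λ))` and the duality
relation `κ(λ)·κ̃(λ)·q·df¹_Σ(κ(λ)) = λ` for all `λ > 0`, then, writing
`df₁ = df¹_Σ(κ(λ))`, `df₂ = df²_Σ(κ(λ))`, `df̃₁ = df¹_K(κ̃(λ))`, `df̃₂ = df²_K(κ̃(λ))`
and `γ = (df₂/df₁)·(df̃₂/df̃₁)`, one has
`κ′(λ) = (κ(λ)/λ)·(1 − df̃₂/df̃₁)/(1 − γ)`. -/
theorem stmt13 {N T : ℕ} (Sg : Matrix (Fin N) (Fin N) ℝ) (hSg : Sg.PosSemidef)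
    (hSg0 : Sg ≠ 0)
    (K : Matrix (Fin T) (Fin T) ℝ) (hK : K.PosDef)
    (q : ℝ) (hq : 0 < q)
    (k kt : ℝ → ℝ)
    (hkpos : ∀ lam : ℝ, 0 < lam → 0 < k lam)
    (hktpos : ∀ lam : ℝ, 0 < lam → 0 < kt lam)
    (hkdiff : ∀ lam : ℝ, 0 < lam → DifferentiableAt ℝ k lam)
    (hktdiff : ∀ lam : ℝ, 0 < lam → DifferentiableAt ℝ kt lam)
    (hmatch : ∀ lam : ℝ, 0 < lam → df1 K (kt lam) = q * df1 Sg (k lam))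
    (hdual : ∀ lam : ℝ, 0 < lam → k lam * kt lam * (q * df1 Sg (k lam)) = lam) :
    ∀ lam : ℝ, 0 < lam →
      deriv k lam =
        (k lam / lam) * ((1 - df2 K (kt lam) / df1 K (kt lam)) /
          (1 - (df2 Sg (k lam) / df1 Sg (k lam)) * (df2 K (kt lam) / df1 K (kt lam)))) := by
  intro lam hlam
  have hka := hkpos lam hlam
  have hkb := hktpos lam hlam
  have hk' : HasDerivAt k (deriv k lam) lam := (hkdiff lam hlam).hasDerivAt
  have hkt' : HasDerivAt kt (deriv kt lam) lam := (hktdiff lam hlam).hasDerivAt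
  have hSd := df1_hasDerivAt hSg hka
  have hKd := df1_hasDerivAt hK.posSemidef hkb
  have hc1 : HasDerivAt (fun x => df1 Sg (k x))
      ((df2 Sg (k lam) - df1 Sg (k lam)) / k lam * deriv k lam) lam := hSd.comp lam hk'
  have hc2 : HasDerivAt (fun x => df1 K (kt x))
      ((df2 K (kt lam) - df1 K (kt lam)) / kt lam * deriv kt lam) lam := hKd.comp lam hkt'
  have hmem : Set.Ioi (0:ℝ) ∈ nhds lam := Ioi_mem_nhds hlam
  have hev1 : (fun x => df1 K (kt x)) =ᶠ[nhds lam] (fun x => q * df1 Sg (k x)) := by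
    filter_upwards [hmem] with x hx
    exact hmatch x hx
  have hc2' : HasDerivAt (fun x => df1 K (kt x))
      (q * ((df2 Sg (k lam) - df1 Sg (k lam)) / k lam * deriv k lam)) lam :=
    (hc1.const_mul q).congr_of_eventuallyEq hev1
  have fact2 := hc2.unique hc2'
  have hG : HasDerivAt (fun x => k x * kt x * (q * df1 Sg (k x)))
      ((deriv k lam * kt lam + k lam * deriv kt lam) * (q * df1 Sg (k lam))
        + (k lam * kt lam) * (q * ((df2 Sg (k lam) - df1 Sg (k lam)) / k lam * deriv k lam)))
      lam := (hk'.mul hkt').mul (hc1.const_mul q)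
  have hev2 : (fun x : ℝ => x) =ᶠ[nhds lam] (fun x => k x * kt x * (q * df1 Sg (k x))) := by
    filter_upwards [hmem] with x hx
    exact (hdual x hx).symm
  have fact1 := (hG.congr_of_eventuallyEq hev2).unique (hasDerivAt_id lam)
  have hd1ne : df1 Sg (k lam) ≠ 0 := by
    intro h
    have hd := hdual lam hlam
    rw [h, mul_zero, mul_zero] at hd
    exact hlam.ne' hd.symm
  have hT : T ≠ 0 := by
    intro h
    subst h
    have hm := hmatch lam hlam
    have hz : df1 K (kt lam) = 0 := by
      simp [df1]
    rw [hz] at hm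
    exact (mul_ne_zero hq.ne' hd1ne) hm.symm
  have hgap := df_gap_pos hT hK hkb
  have hfact2' : k lam * (df2 K (kt lam) - df1 K (kt lam)) * deriv kt lam
      = q * (df2 Sg (k lam) - df1 Sg (k lam)) * kt lam * deriv k lam := by
    have h2 := congrArg (fun t => k lam * kt lam * t) fact2
    field_simp at h2
    apply mul_left_cancel₀ (mul_ne_zero hka.ne' hkb.ne')
    linear_combination (k lam * kt lam) * h2
  have heq1 : deriv k lam * kt lam * df1 K (kt lam)
      + k lam * df2 K (kt lam) * deriv kt lam = 1 := by
    have h3 : k lam * kt lam * (q * ((df2 Sg (k lam) - df1 Sg (k lam)) / k lam * deriv k lam))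
        = q * (df2 Sg (k lam) - df1 Sg (k lam)) * kt lam * deriv k lam := by
      field_simp
    rw [h3, ← hfact2'] at fact1
    linear_combination fact1 + (deriv k lam * kt lam + k lam * deriv kt lam) * (hmatch lam hlam)
  exact alg_main (k lam) (kt lam) (deriv k lam) (deriv kt lam)
    (df1 Sg (k lam)) (df2 Sg (k lam)) (df1 K (kt lam)) (df2 K (kt lam)) q lam
    hka.ne' hkb.ne' hq.ne' hlam.ne' (hmatch lam hlam) (hdual lam hlam) heq1 hfact2' hgap
end
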